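/- arXiv:math/0007055 — 3 statements merged into one kernel-verified Lean document; each statement's English description precedes it below -/
import Mathlib

section
/- Let (E,d) be a metric space and let S : [0,∞) × E → E be a Lipschitz semigroup with Lipschitz constant L. Then for every T > 0 and every Lipschitz continuous map w : [0,T] → E one has d(w(T), S_T w(0)) ≤ L · ∫₀^T liminf_{h→0⁺} d(w(t+h), S_h w(t))/h dt, where the integrand is bounded (by (Lip(w) + L)) and the integral may be taken as the (upper) Lebesgue integral. -/
open MeasureTheory Filter Set Topology
open scoped ENNReal NNReal

/-- If `u` is eventually nonnegative and eventually bounded above along a nontrivial filter,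
then `ENNReal.ofReal` commutes with `liminf`. -/
lemma ofReal_liminf_eq {α : Type*} {u : α → ℝ} {f : Filter α} [f.NeBot]
    (h0 : ∀ᶠ x in f, 0 ≤ u x) {M : ℝ} (hM : ∀ᶠ x in f, u x ≤ M) :
    liminf (fun x => ENNReal.ofReal (u x)) f = ENNReal.ofReal (liminf u f) := by
  have hb : f.IsBoundedUnder (· ≥ ·) u := ⟨0, h0⟩
  have hb' : f.IsBoundedUnder (· ≤ ·) u := ⟨M, hM⟩
  have hcb : f.IsCoboundedUnder (· ≥ ·) u := hb'.isCoboundedUnder_ge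
  set c := liminf u f with hc
  apply le_antisymm
  · -- liminf ofReal ≤ ofReal liminf
    refine ENNReal.le_of_forall_pos_le_add fun ε hε hfin => ?_
    have hlt : c < c + ε := lt_add_of_pos_right _ (by exact_mod_cast hε)
    have hfreq : ∃ᶠ x in f, u x < c + ε := frequently_lt_of_liminf_lt hcb hlt
    have : ∃ᶠ x in f, ENNReal.ofReal (u x) ≤ ENNReal.ofReal (c + ε) :=
      hfreq.mono fun x hx => ENNReal.ofReal_le_ofReal hx.le
    calc liminf (fun x => ENNReal.ofReal (u x)) f ≤ ENNReal.ofReal (c + ε) :=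
          liminf_le_of_frequently_le' this
      _ ≤ ENNReal.ofReal c + ENNReal.ofReal ε := ENNReal.ofReal_add_le
      _ = ENNReal.ofReal c + ε := by rw [ENNReal.ofReal_coe_nnreal]
  · -- ofReal liminf ≤ liminf ofReal
    rcases le_or_gt c 0 with hc0 | hc0
    · simp [ENNReal.ofReal_of_nonpos hc0]
    refine ENNReal.le_of_forall_pos_le_add fun ε hε hfin => ?_
    rcases le_or_gt c (ε : ℝ) with hce | hce
    · calc ENNReal.ofReal c ≤ ENNReal.ofReal (ε : ℝ) := ENNReal.ofReal_le_ofReal hce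
        _ = (ε : ℝ≥0∞) := ENNReal.ofReal_coe_nnreal
        _ ≤ _ := le_add_self
    · have h1 : ENNReal.ofReal (c - ε) ≤ liminf (fun x => ENNReal.ofReal (u x)) f := by
        have hev : ∀ᶠ x in f, c - ε < u x :=
          eventually_lt_of_lt_liminf (sub_lt_self _ (by exact_mod_cast hε)) hb
        refine le_liminf_of_le (by isBoundedDefault) ?_
        exact hev.mono fun x hx => ENNReal.ofReal_le_ofReal hx.le
      calc ENNReal.ofReal c ≤ ENNReal.ofReal (c - ε) + ENNReal.ofReal (ε : ℝ) := by
            rw [← ENNReal.ofReal_add (by linarith) (by positivity)]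
            simp
        _ ≤ liminf (fun x => ENNReal.ofReal (u x)) f + ε := by
            rw [ENNReal.ofReal_coe_nnreal]; exact add_le_add_left h1 _

/-- Fencing lemma: if `f a ≤ B a`, both are continuous on `[a,b]`, and at every touching
point there are points to the right arbitrarily close where `f ≤ B`, then `f ≤ B` on `[a,b]`. -/
lemma fence_aux {f B : ℝ → ℝ} {a b : ℝ}
    (hf : ContinuousOn f (Set.Icc a b)) (hB : ContinuousOn B (Set.Icc a b))
    (ha : f a ≤ B a)
    (key : ∀ x ∈ Set.Ico a b, f x = B x → ∃ᶠ z in 𝓝[>] x, f z ≤ B z) :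
    ∀ x ∈ Set.Icc a b, f x ≤ B x := by
  set s := {x | f x ≤ B x}
  have A : ContinuousOn (fun x => (f x, B x)) (Icc a b) := hf.prodMk hB
  have hcl : IsClosed (s ∩ Icc a b) := by
    rw [inter_comm]
    exact A.preimage_isClosed_of_isClosed isClosed_Icc OrderClosedTopology.isClosed_le'
  intro x hx
  refine hcl.Icc_subset_of_forall_exists_gt ha ?_ hx
  rintro y ⟨hys : f y ≤ B y, hy1, hy2⟩ z hz
  have hyIco : y ∈ Ico a b := ⟨hy1, hy2⟩
  have hmem : Ioc y z ∈ 𝓝[>] y := Ioc_mem_nhdsGT_of_mem ⟨le_rfl, hz⟩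
  rcases hys.lt_or_eq with hlt | heq
  · have h1 : ∀ᶠ u in 𝓝[Icc a b] y, f u < B u :=
      A y (Ico_subset_Icc_self hyIco)
        (IsOpen.mem_nhds (isOpen_lt continuous_fst continuous_snd) hlt)
    have h2 : ∀ᶠ u in 𝓝[>] y, f u < B u :=
      nhdsWithin_le_of_mem (Icc_mem_nhdsGT_of_mem hyIco) h1
    rcases (h2.and hmem).exists with ⟨u, hu1, hu2⟩
    exact ⟨u, hu1.le, hu2⟩
  · rcases ((key y hyIco heq).and_eventually hmem).exists with ⟨u, hu1, hu2⟩
    exact ⟨u, hu1, hu2⟩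

/-- Measurability of a right liminf at `0⁺`, via reduction to rational parameters. -/
lemma measurable_liminf_aux {Q : ℝ → ℝ → ℝ≥0∞}
    (hmeas : ∀ h : ℝ, 0 < h → Measurable fun t => Q t h)
    (hcont : ∀ t, ContinuousOn (Q t) (Set.Ioi 0)) :
    Measurable fun t => Filter.liminf (fun h => Q t h) (𝓝[>] (0:ℝ)) := by
  have hQ : ∀ t, ∀ δ : ℝ, 0 < δ →
      (⨅ h ∈ Ioo (0:ℝ) δ, Q t h) = ⨅ (r : ℚ) (_ : (r:ℝ) ∈ Ioo (0:ℝ) δ), Q t r := by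
    intro t δ hδ
    apply le_antisymm
    · exact le_iInf₂ fun r hr => iInf₂_le (r:ℝ) hr
    · refine le_iInf₂ fun h hh => ?_
      have hh0 : (0:ℝ) < h := hh.1
      have hchoice : ∀ k : ℕ, ∃ r : ℚ, max (h - 1/(k+1)) (h/2) < (r:ℝ) ∧ (r:ℝ) < h := by
        intro k
        exact exists_rat_btwn (max_lt (sub_lt_self h (by positivity)) (by linarith))
      choose r hr1 hr2 using hchoice
      have hrpos : ∀ k, (0:ℝ) < (r k : ℝ) := fun k =>
        lt_trans (by positivity) (lt_of_le_of_lt (le_max_right _ _) (hr1 k))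
      have hrmem : ∀ k, (r k : ℝ) ∈ Ioo (0:ℝ) δ := fun k =>
        ⟨hrpos k, lt_trans (hr2 k) hh.2⟩
      have htend : Tendsto (fun k : ℕ => (r k : ℝ)) atTop (𝓝 h) := by
        refine tendsto_of_tendsto_of_tendsto_of_le_of_le
          (g := fun k : ℕ => h - 1/(k+1)) (h := fun _ : ℕ => h) ?_ tendsto_const_nhds
          (fun k => le_trans (le_trans (le_max_left _ _) (hr1 k).le) le_rfl)
          (fun k => (hr2 k).le)
        have : Tendsto (fun k : ℕ => 1/((k:ℝ)+1)) atTop (𝓝 0) :=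
          tendsto_one_div_add_atTop_nhds_zero_nat
        simpa using tendsto_const_nhds.sub this
      have htendW : Tendsto (fun k : ℕ => (r k : ℝ)) atTop (𝓝[Set.Ioi 0] h) :=
        tendsto_nhdsWithin_of_tendsto_nhds_of_eventually_within _ htend
          (Eventually.of_forall fun k => hrpos k)
      have hQtend : Tendsto (fun k : ℕ => Q t (r k)) atTop (𝓝 (Q t h)) :=
        (hcont t h hh0).tendsto.comp htendW
      exact ge_of_tendsto hQtend
        (Eventually.of_forall fun k => iInf₂_le (r k) (hrmem k))
  have hrep : ∀ t, liminf (fun h => Q t h) (𝓝[>] (0:ℝ)) =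
      ⨆ n : ℕ, ⨅ (r : ℚ) (_ : (r:ℝ) ∈ Ioo (0:ℝ) (1/(n+1))), Q t (r:ℝ) := by
    intro t
    rw [(nhdsGT_basis (0:ℝ)).liminf_eq_iSup_iInf]
    apply le_antisymm
    · refine iSup₂_le fun ε hε => ?_
      obtain ⟨n, hn⟩ := exists_nat_one_div_lt hε
      have hsub : Ioo (0:ℝ) (1/(n+1)) ⊆ Ioo (0:ℝ) ε := Ioo_subset_Ioo le_rfl hn.le
      calc (⨅ h ∈ Ioo (0:ℝ) ε, Q t h) ≤ ⨅ h ∈ Ioo (0:ℝ) (1/(n+1)), Q t h :=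
            biInf_mono hsub
        _ = ⨅ (r : ℚ) (_ : (r:ℝ) ∈ Ioo (0:ℝ) (1/(n+1))), Q t (r:ℝ) :=
            hQ t _ (by positivity)
        _ ≤ _ := le_iSup (fun n : ℕ => ⨅ (r : ℚ) (_ : (r:ℝ) ∈ Ioo (0:ℝ) (1/(n+1))), Q t (r:ℝ)) n
    · refine iSup_le fun n => ?_
      rw [← hQ t _ (by positivity : (0:ℝ) < 1/(n+1))]
      exact le_iSup₂ (f := fun (ε : ℝ) (_ : (0:ℝ) < ε) => ⨅ h ∈ Ioo (0:ℝ) ε, Q t h)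
        (1/(n+1)) (by positivity)
  simp_rw [hrep]
  refine Measurable.iSup fun n => Measurable.iInf fun r => Measurable.iInf fun hr =>
    hmeas _ hr.1

/-- Error estimate for Lipschitz semigroups: for any Lipschitz curve `w` on `[0,T]`,
the distance between `w T` and `S T (w 0)` is bounded by `L` times the (upper Lebesgue)
integral of the lower right Dini quotient `d(w(t+h), S_h w(t))/h`. -/
theorem semigroup_error_estimate {E : Type*} [MetricSpace E]
    (S : ℝ → E → E) (L : ℝ) (hL : 0 < L)
    (hS0 : ∀ u : E, S 0 u = u)
    (hSsemi : ∀ s t : ℝ, 0 ≤ s → 0 ≤ t → ∀ u : E, S t (S s u) = S (t + s) u)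
    (hSlip : ∀ s t : ℝ, 0 ≤ s → 0 ≤ t → ∀ u w : E,
      dist (S t u) (S s w) ≤ L * (|t - s| + dist u w))
    (T : ℝ) (hT : 0 < T)
    (w : ℝ → E) (C : NNReal) (hw : LipschitzOnWith C w (Set.Icc 0 T)) :
    ENNReal.ofReal (dist (w T) (S T (w 0))) ≤
      ENNReal.ofReal L *
        ∫⁻ t in Set.Ioc (0 : ℝ) T,
          ENNReal.ofReal
            (liminf (fun h : ℝ => dist (w (t + h)) (S h (w t)) / h)
              (nhdsWithin 0 (Set.Ioi 0))) := by
  have hT0 : (0:ℝ) ≤ T := hT.le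
  set w' : ℝ → E := fun t => w (max 0 (min t T)) with hw'def
  have hClmem : ∀ t : ℝ, max 0 (min t T) ∈ Icc 0 T := fun t =>
    ⟨le_max_left _ _, max_le hT0 (min_le_right _ _)⟩
  have hCl : ∀ t ∈ Icc (0:ℝ) T, max 0 (min t T) = t := fun t ht => by
    rw [min_eq_left ht.2, max_eq_right ht.1]
  have hw'eq : ∀ t ∈ Icc (0:ℝ) T, w' t = w t := fun t ht => by
    simp only [hw'def, hCl t ht]
  have hw'lip : ∀ s t : ℝ, dist (w' s) (w' t) ≤ C * |s - t| := by
    intro s t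
    have h1 := hw.dist_le_mul _ (hClmem s) _ (hClmem t)
    refine h1.trans ?_
    have h2 : dist (max 0 (min s T)) (max 0 (min t T)) ≤ |s - t| := by
      rw [Real.dist_eq]
      calc |max 0 (min s T) - max 0 (min t T)| = |max (min s T) 0 - max (min t T) 0| := by
            rw [max_comm 0 _, max_comm 0 _]
        _ ≤ |min s T - min t T| := abs_max_sub_max_le_abs _ _ _
        _ ≤ max |s - t| |T - T| := abs_min_sub_min_le_max _ _ _ _
        _ = |s - t| := by simp
    exact mul_le_mul_of_nonneg_left h2 C.coe_nonneg
  have hw'cont : Continuous w' := by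
    refine (LipschitzWith.of_dist_le_mul (K := C) fun s t => ?_).continuous
    simpa [Real.dist_eq] using hw'lip s t
  have hSstep : ∀ (u : E) (h : ℝ), 0 ≤ h → dist u (S h u) ≤ L * h := by
    intro u h hh
    have := hSlip 0 h le_rfl hh u u
    simpa [hS0, dist_comm, abs_of_nonneg hh] using this
  have hScontract : ∀ (h : ℝ), 0 ≤ h → ∀ u v : E, dist (S h u) (S h v) ≤ L * dist u v := by
    intro h hh u v
    simpa using hSlip h h hh hh u v
  set q : ℝ → ℝ → ℝ := fun t h => dist (w' (t + h)) (S h (w' t)) / h with hqdef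
  have hq0 : ∀ t h : ℝ, 0 < h → 0 ≤ q t h := fun t h hh => div_nonneg dist_nonneg hh.le
  have hqM : ∀ t h : ℝ, 0 < h → q t h ≤ C + L := by
    intro t h hh
    rw [hqdef, div_le_iff₀ hh]
    calc dist (w' (t + h)) (S h (w' t))
        ≤ dist (w' (t + h)) (w' t) + dist (w' t) (S h (w' t)) := dist_triangle _ _ _
      _ ≤ C * |t + h - t| + L * h := add_le_add (hw'lip _ _) (hSstep _ _ hh.le)
      _ = (C + L) * h := by rw [add_sub_cancel_left, abs_of_pos hh]; ring
  have hev0 : ∀ t, ∀ᶠ h in 𝓝[>] (0:ℝ), 0 ≤ q t h :=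
    fun t => eventually_nhdsWithin_of_forall fun h hh => hq0 t h hh
  have hevM : ∀ t, ∀ᶠ h in 𝓝[>] (0:ℝ), q t h ≤ C + L :=
    fun t => eventually_nhdsWithin_of_forall fun h hh => hqM t h hh
  set G : ℝ → ℝ≥0∞ := fun t => liminf (fun h => ENNReal.ofReal (q t h)) (𝓝[>] (0:ℝ)) with hGdef
  have hGeq : ∀ t, G t = ENNReal.ofReal (liminf (fun h => q t h) (𝓝[>] (0:ℝ))) :=
    fun t => ofReal_liminf_eq (hev0 t) (hevM t)
  have hGle : ∀ t, G t ≤ ENNReal.ofReal (C + L) := by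
    intro t
    rw [hGeq t]
    refine ENNReal.ofReal_le_ofReal ?_
    exact liminf_le_of_frequently_le ((hevM t).frequently) ⟨0, hev0 t⟩
  have hGtop : ∀ t, G t ≠ ∞ := fun t => (lt_of_le_of_lt (hGle t) ENNReal.ofReal_lt_top).ne
  have hGmeas : Measurable G := by
    refine measurable_liminf_aux (fun h hh => ?_) (fun t => ?_)
    · exact (ENNReal.continuous_ofReal.comp
        (((hw'cont.comp (continuous_add_right h)).dist
          (((LipschitzWith.of_dist_le_mul (K := L.toNNReal) fun u v => by
              simpa [Real.coe_toNNReal L hL.le] using hScontract h hh.le u v).continuous).comp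
            hw'cont)).div_const h)).measurable
    · have c2 : ContinuousOn (fun h => S h (w' t)) (Ioi (0:ℝ)) := by
        refine ((LipschitzOnWith.of_dist_le' (K := L) (s := Ici (0:ℝ))
          fun x hx y hy => ?_).continuousOn).mono Ioi_subset_Ici_self
        simpa [Real.dist_eq] using hSlip y x hy hx (w' t) (w' t)
      refine ENNReal.continuous_ofReal.comp_continuousOn ?_
      exact (continuous_dist.comp_continuousOn
        (((hw'cont.comp (continuous_add_left t)).continuousOn).prodMk c2)).div
        continuousOn_id (fun h hh => ne_of_gt hh)
  -- relation between G and the statement's integrand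
  have hGstmt : ∀ t ∈ Ioo (0:ℝ) T, G t =
      ENNReal.ofReal (liminf (fun h : ℝ => dist (w (t + h)) (S h (w t)) / h) (𝓝[>] (0:ℝ))) := by
    intro t ht
    rw [hGeq t]
    congr 1
    apply liminf_congr
    filter_upwards [Ioo_mem_nhdsGT_of_mem (Set.left_mem_Ico.2 (sub_pos.2 ht.2))] with h hh
    have h1 : t + h ∈ Icc (0:ℝ) T := ⟨by nlinarith [ht.1, hh.1], by nlinarith [hh.2]⟩
    simp only [hqdef]
    rw [hw'eq _ h1, hw'eq t ⟨ht.1.le, ht.2.le⟩]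
  set I : ℝ≥0∞ := ∫⁻ t in Set.Ioc (0 : ℝ) T,
      ENNReal.ofReal (liminf (fun h : ℝ => dist (w (t + h)) (S h (w t)) / h)
        (𝓝[>] (0:ℝ))) with hIdef
  have hIG : ∫⁻ t in Set.Ioc (0:ℝ) T, G t = I := by
    rw [hIdef, ← setLIntegral_congr (Ioo_ae_eq_Ioc (a := (0:ℝ)) (b := T)),
      ← setLIntegral_congr (Ioo_ae_eq_Ioc (a := (0:ℝ)) (b := T))]
    exact setLIntegral_congr_fun measurableSet_Ioo hGstmt
  by_cases hI : I = ∞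
  · rw [hI, ENNReal.mul_top (by simpa using (ENNReal.ofReal_pos.2 hL).ne')]
    exact le_top
  -- main quantitative estimate
  have hmain : ∀ ε : ℝ, 0 < ε →
      dist (w T) (S T (w 0)) ≤ ε * T + L * (I.toReal + ε) := by
    intro ε hε
    -- Vitali-Caratheodory
    set φ : ℝ → ℝ≥0 := (Icc (0:ℝ) T).indicator fun t => (G t).toNNReal with hφdef
    have hφmeas : Measurable φ := (hGmeas.ennreal_toNNReal).indicator measurableSet_Icc
    have hφint : ∫⁻ t, (φ t : ℝ≥0∞) = I := by
      calc ∫⁻ t, (φ t : ℝ≥0∞)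
          = ∫⁻ t, (Icc (0:ℝ) T).indicator (fun x => ((G x).toNNReal : ℝ≥0∞)) t := by
            simp only [hφdef, ENNReal.coe_indicator]
        _ = ∫⁻ t in Icc (0:ℝ) T, ((G t).toNNReal : ℝ≥0∞) := lintegral_indicator measurableSet_Icc _
        _ = ∫⁻ t in Icc (0:ℝ) T, G t := by
            apply lintegral_congr; intro t; rw [ENNReal.coe_toNNReal (hGtop t)]
        _ = ∫⁻ t in Ioc (0:ℝ) T, G t := (setLIntegral_congr Ioc_ae_eq_Icc).symm
        _ = I := hIG
    obtain ⟨G', hG'gt, hG'lsc, hG'int⟩ :=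
      exists_lt_lowerSemicontinuous_lintegral_ge volume φ hφmeas
        (ε := ENNReal.ofReal ε) (ENNReal.ofReal_pos.2 hε).ne'
    set K' : ℝ≥0∞ := ENNReal.ofReal (C + L + 1) with hK'def
    set G'' : ℝ → ℝ≥0∞ := fun x => min (G' x) K' with hG''def
    have hG''top : ∀ x, G'' x ≠ ∞ :=
      fun x => (lt_of_le_of_lt (min_le_right _ _) ENNReal.ofReal_lt_top).ne
    have hG''K : ∀ x, G'' x ≤ K' := fun x => min_le_right _ _
    have hGG'' : ∀ x ∈ Icc (0:ℝ) T, G x ≤ G'' x := by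
      intro x hx
      refine le_min ?_ ((hGle x).trans (ENNReal.ofReal_le_ofReal (by linarith)))
      have hφx : (φ x : ℝ≥0∞) = G x := by
        simp only [hφdef, Set.indicator_of_mem hx, ENNReal.coe_toNNReal (hGtop x)]
      rw [← hφx]; exact (hG'gt x).le
    have hG''int : ∫⁻ x in Ioc (0:ℝ) T, G'' x ≤ I + ENNReal.ofReal ε := by
      calc ∫⁻ x in Ioc (0:ℝ) T, G'' x ≤ ∫⁻ x in Ioc (0:ℝ) T, G' x :=
            lintegral_mono fun x => min_le_left _ _
        _ ≤ ∫⁻ x, G' x := setLIntegral_le_lintegral _ _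
        _ ≤ (∫⁻ x, (φ x : ℝ≥0∞)) + ENNReal.ofReal ε := hG'int
        _ = I + ENNReal.ofReal ε := by rw [hφint]
    have hIocK : ∀ x z : ℝ, (∫⁻ s in Ioc x z, G'' s) ≤ K' * ENNReal.ofReal (z - x) := by
      intro x z
      calc (∫⁻ s in Ioc x z, G'' s) ≤ ∫⁻ _ in Ioc x z, K' :=
            setLIntegral_mono' measurableSet_Ioc fun y _ => hG''K y
        _ = K' * volume (Ioc x z) := setLIntegral_const _ _
        _ = K' * ENNReal.ofReal (z - x) := by rw [Real.volume_Ioc]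
    have hIocfin : ∀ x z : ℝ, (∫⁻ s in Ioc x z, G'' s) ≠ ∞ := fun x z =>
      (lt_of_le_of_lt (hIocK x z) (ENNReal.mul_lt_top ENNReal.ofReal_lt_top
        ENNReal.ofReal_lt_top)).ne
    have htoReal : ∀ x z : ℝ, x ≤ z →
        (∫⁻ s in Ioc x z, G'' s).toReal ≤ (C + L + 1) * (z - x) := by
      intro x z hxz
      have h1 := ENNReal.toReal_mono (ENNReal.mul_lt_top ENNReal.ofReal_lt_top
        ENNReal.ofReal_lt_top).ne (hIocK x z)
      rwa [ENNReal.toReal_mul,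
        ENNReal.toReal_ofReal (by linarith [C.coe_nonneg] : (0:ℝ) ≤ C + L + 1),
        ENNReal.toReal_ofReal (by linarith)] at h1
    set Bf : ℝ → ℝ := fun t => ε * t + L * (∫⁻ s in Ioc (0:ℝ) t, G'' s).toReal with hBfdef
    have hBsub : ∀ x z : ℝ, 0 ≤ x → x ≤ z →
        Bf z - Bf x = ε * (z - x) + L * (∫⁻ s in Ioc x z, G'' s).toReal := by
      intro x z hx hxz
      have h5 : (∫⁻ s in Ioc (0:ℝ) z, G'' s)
          = (∫⁻ s in Ioc (0:ℝ) x, G'' s) + ∫⁻ s in Ioc x z, G'' s := by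
        rw [← Ioc_union_Ioc_eq_Ioc hx hxz,
          lintegral_union measurableSet_Ioc (Set.Ioc_disjoint_Ioc_of_le le_rfl)]
      have h6 : (∫⁻ s in Ioc (0:ℝ) z, G'' s).toReal
          = (∫⁻ s in Ioc (0:ℝ) x, G'' s).toReal + (∫⁻ s in Ioc x z, G'' s).toReal := by
        rw [h5, ENNReal.toReal_add (hIocfin 0 x) (hIocfin x z)]
      simp only [hBfdef]; rw [h6]; ring
    have hBcont : ContinuousOn Bf (Icc (0:ℝ) T) := by
      have haux : ∀ x ∈ Icc (0:ℝ) T, ∀ z ∈ Icc (0:ℝ) T, x ≤ z →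
          |Bf z - Bf x| ≤ (ε + L * (C + L + 1)) * |z - x| := by
        intro x hx z _ hxz
        have h1 := hBsub x z hx.1 hxz
        have h2 : (0:ℝ) ≤ (∫⁻ s in Ioc x z, G'' s).toReal := ENNReal.toReal_nonneg
        have h3 := htoReal x z hxz
        rw [abs_of_nonneg (by linarith : (0:ℝ) ≤ z - x)]
        rw [abs_of_nonneg (by nlinarith : (0:ℝ) ≤ Bf z - Bf x)]
        nlinarith
      refine (LipschitzOnWith.of_dist_le' (K := ε + L * (C + L + 1)) ?_).continuousOn
      intro x hx y hy
      rcases le_total x y with hxy | hxy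
      · rw [Real.dist_eq, Real.dist_eq, abs_sub_comm (Bf x) (Bf y), abs_sub_comm x y]
        exact haux x hx y hy hxy
      · rw [Real.dist_eq, Real.dist_eq]
        exact haux y hy x hx hxy
    set f : ℝ → ℝ := fun t => dist (S (T - t) (w' t)) (S T (w' 0)) with hfdef
    have hfcont : ContinuousOn f (Icc (0:ℝ) T) := by
      refine (LipschitzOnWith.of_dist_le' (K := L * (1 + C)) ?_).continuousOn
      intro x hx y hy
      rw [Real.dist_eq, Real.dist_eq]
      calc |f x - f y| ≤ dist (S (T - x) (w' x)) (S (T - y) (w' y)) :=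
            abs_dist_sub_le _ _ _
        _ ≤ L * (|T - x - (T - y)| + dist (w' x) (w' y)) :=
            hSlip (T - y) (T - x) (by linarith [hy.2]) (by linarith [hx.2]) _ _
        _ ≤ L * (|x - y| + C * |x - y|) := by
            have h1 : |T - x - (T - y)| = |x - y| := by rw [abs_sub_comm]; ring_nf
            rw [h1]
            exact mul_le_mul_of_nonneg_left (add_le_add le_rfl (hw'lip x y)) hL.le
        _ = L * (1 + C) * |x - y| := by ring
    have hslopef : ∀ x ∈ Ico (0:ℝ) T, ∀ z ∈ Ioc x T,
        f z - f x ≤ L * (q x (z - x) * (z - x)) := by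
      intro x hx z hz
      have hzx : 0 < z - x := sub_pos.2 hz.1
      have hxz : x + (z - x) = z := by ring
      have e2 : S (T - x) (w' x) = S (T - z) (S (z - x) (w' x)) := by
        rw [hSsemi (z - x) (T - z) (by linarith) (by linarith [hz.2])]
        congr 1; ring
      have e4 : q x (z - x) * (z - x) = dist (w' z) (S (z - x) (w' x)) := by
        simp only [hqdef]
        rw [div_mul_cancel₀ _ hzx.ne', hxz]
      have e1 : f z - f x ≤ dist (S (T - z) (w' z)) (S (T - x) (w' x)) := by
        have h7 := dist_triangle (S (T - z) (w' z)) (S (T - x) (w' x)) (S T (w' 0))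
        simp only [hfdef]
        linarith
      have e3 : dist (S (T - z) (w' z)) (S (T - z) (S (z - x) (w' x)))
          ≤ L * dist (w' z) (S (z - x) (w' x)) :=
        hScontract (T - z) (by linarith [hz.2]) _ _
      rw [e4]
      calc f z - f x ≤ dist (S (T - z) (w' z)) (S (T - x) (w' x)) := e1
        _ = dist (S (T - z) (w' z)) (S (T - z) (S (z - x) (w' x))) := by rw [← e2]
        _ ≤ L * dist (w' z) (S (z - x) (w' x)) := e3
    -- the fencing key hypothesis
    have key : ∀ x ∈ Ico (0:ℝ) T, f x = Bf x → ∃ᶠ z in 𝓝[>] x, f z ≤ Bf z := by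
      intro x hx hfBx
      set g : ℝ := (G'' x).toReal with hgdef
      clear_value g
      have hg0 : 0 ≤ g := by rw [hgdef]; exact ENNReal.toReal_nonneg
      have hxIcc : x ∈ Icc (0:ℝ) T := ⟨hx.1, hx.2.le⟩
      have hℓ : liminf (fun h => q x h) (𝓝[>] (0:ℝ)) ≤ g := by
        have h1 : ENNReal.ofReal (liminf (fun h => q x h) (𝓝[>] (0:ℝ))) ≤ G'' x := by
          rw [← hGeq x]; exact hGG'' x hxIcc
        rcases le_or_gt (liminf (fun h => q x h) (𝓝[>] (0:ℝ))) 0 with h0 | h0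
        · exact h0.trans hg0
        · have h2 := ENNReal.toReal_mono (hG''top x) h1
          rw [ENNReal.toReal_ofReal h0.le] at h2
          rw [hgdef]
          exact h2
      set ρ : ℝ := g + ε / (2 * L) with hρdef
      clear_value ρ
      have hρpos : 0 < ε / (2 * L) := by positivity
      have hfreq0 : ∃ᶠ h in 𝓝[>] (0:ℝ), q x h < ρ :=
        frequently_lt_of_liminf_lt (IsBoundedUnder.isCoboundedUnder_ge ⟨C + L, hevM x⟩)
          (lt_of_le_of_lt hℓ (by rw [hρdef]; exact lt_add_of_pos_right _ hρpos))
      have htendsto : Tendsto (fun h : ℝ => x + h) (𝓝[>] (0:ℝ)) (𝓝[>] x) := by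
        apply tendsto_nhdsWithin_of_tendsto_nhds_of_eventually_within
        · have h8 : Tendsto (fun h : ℝ => x + h) (𝓝 (0:ℝ)) (𝓝 x) := by
            simpa using (continuous_add_left x).tendsto (0:ℝ)
          exact h8.mono_left nhdsWithin_le_nhds
        · exact eventually_nhdsWithin_of_forall fun h hh => by
            simpa [mem_Ioi] using (show x < x + h by linarith [show (0:ℝ) < h from hh])
      have hfreq : ∃ᶠ z in 𝓝[>] x, q x (z - x) < ρ := by
        apply htendsto.frequently
        exact hfreq0.mono fun h hh => by simpa using hh
      have hevIoc : ∀ᶠ z in 𝓝[>] x, z ∈ Ioc x T :=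
        Ioc_mem_nhdsGT_of_mem ⟨le_rfl, hx.2⟩
      have hevB : ∀ᶠ z in 𝓝[>] x, (L * ρ) * (z - x) ≤ Bf z - Bf x := by
        rcases le_or_gt g (ε / (2 * L)) with hgsmall | hgbig
        · filter_upwards [self_mem_nhdsWithin] with z hz
          have hz' : x < z := hz
          have hzx : (0:ℝ) ≤ z - x := by linarith
          have h9 := hBsub x z hx.1 hz'.le
          have h6 : L * g ≤ ε / 2 := by
            calc L * g ≤ L * (ε / (2 * L)) := mul_le_mul_of_nonneg_left hgsmall hL.le
              _ = ε / 2 := by field_simp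
          have h7 : (0:ℝ) ≤ L * (∫⁻ s in Ioc x z, G'' s).toReal := by positivity
          have hLρ : L * ρ = ε / 2 + L * g := by
            rw [hρdef]; field_simp; ring
          have h20 : L * ρ ≤ ε := by linarith
          have h21 := mul_le_mul_of_nonneg_right h20 hzx
          linarith
        · set c : ℝ := g - ε / (2 * L) with hcdef
          clear_value c
          have hcpos : 0 < c := by rw [hcdef]; exact sub_pos.2 hgbig
          have hgpos : 0 < g := lt_trans hρpos hgbig
          have hclt : ENNReal.ofReal c < G'' x := by
            have h10 : ENNReal.ofReal c < ENNReal.ofReal g :=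
              (ENNReal.ofReal_lt_ofReal_iff hgpos).2 (by rw [hcdef]; linarith)
            rwa [hgdef, ENNReal.ofReal_toReal (hG''top x)] at h10
          have hev1 : ∀ᶠ y in 𝓝 x, ENNReal.ofReal c < G' y :=
            hG'lsc x _ (lt_of_lt_of_le hclt (min_le_left _ _))
          have hev2 : ∀ᶠ y in 𝓝 x, ENNReal.ofReal c < G'' y := by
            filter_upwards [hev1] with y hy
            exact lt_min hy (lt_of_lt_of_le hclt (hG''K x))
          obtain ⟨δ, hδ, hball⟩ := Metric.eventually_nhds_iff.1 hev2
          filter_upwards [Ioo_mem_nhdsGT_of_mem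
            (Set.left_mem_Ico.2 (lt_add_of_pos_right x hδ)), self_mem_nhdsWithin] with z hzoo hz
          have hz' : x < z := hz
          have hzx : 0 < z - x := by linarith
          have hsubc : ∀ y ∈ Ioc x z, ENNReal.ofReal c ≤ G'' y := by
            intro y hy
            refine (hball ?_).le
            rw [Real.dist_eq, abs_of_nonneg (by linarith [hy.1] : (0:ℝ) ≤ y - x)]
            have := hzoo.2
            have := hy.2
            linarith
          have hint : ENNReal.ofReal c * ENNReal.ofReal (z - x) ≤ ∫⁻ s in Ioc x z, G'' s := by
            calc ENNReal.ofReal c * ENNReal.ofReal (z - x)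
                = ∫⁻ _ in Ioc x z, ENNReal.ofReal c := by
                  rw [setLIntegral_const, Real.volume_Ioc]
              _ ≤ _ := setLIntegral_mono' measurableSet_Ioc hsubc
          have hreal : c * (z - x) ≤ (∫⁻ s in Ioc x z, G'' s).toReal := by
            have h11 := ENNReal.toReal_mono (hIocfin x z) hint
            rwa [ENNReal.toReal_mul, ENNReal.toReal_ofReal hcpos.le,
              ENNReal.toReal_ofReal hzx.le] at h11
          have h9 := hBsub x z hx.1 hz'.le
          have hLc : L * ρ = ε + L * c := by
            rw [hρdef, hcdef]
            field_simp
            ring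
          have h22 := mul_le_mul_of_nonneg_left hreal hL.le
          have h23 : L * ρ * (z - x) = ε * (z - x) + L * (c * (z - x)) := by
            rw [hLc]; ring
          linarith
      refine ((hfreq.and_eventually (hevIoc.and hevB)).mono ?_)
      rintro z ⟨hqz, hzIoc, hB⟩
      have hzx : 0 < z - x := sub_pos.2 hzIoc.1
      have h1 := hslopef x hx z hzIoc
      have h2 : L * (q x (z - x) * (z - x)) < (L * ρ) * (z - x) := by
        have := mul_lt_mul_of_pos_right hqz hzx
        nlinarith
      linarith
    -- apply the fencing lemma
    have hfence := fence_aux hfcont hBcont (by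
      simp only [hfdef, hBfdef, sub_zero, Set.Ioc_self, Measure.restrict_empty,
        lintegral_zero_measure, dist_self]
      norm_num) key T ⟨hT0, le_rfl⟩
    have hfT : f T = dist (w T) (S T (w 0)) := by
      simp only [hfdef, sub_self, hS0]
      rw [hw'eq T ⟨hT0, le_rfl⟩, hw'eq 0 ⟨le_rfl, hT0⟩]
    have hBT : Bf T ≤ ε * T + L * (I.toReal + ε) := by
      have h12 : (∫⁻ s in Ioc (0:ℝ) T, G'' s).toReal ≤ I.toReal + ε := by
        have h13 := ENNReal.toReal_mono
          (ENNReal.add_ne_top.2 ⟨hI, ENNReal.ofReal_ne_top⟩) hG''int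
        rwa [ENNReal.toReal_add hI ENNReal.ofReal_ne_top,
          ENNReal.toReal_ofReal hε.le] at h13
      simp only [hBfdef]
      have := mul_le_mul_of_nonneg_left h12 hL.le
      linarith
    rw [← hfT]
    exact le_trans hfence hBT
  have hfinal : dist (w T) (S T (w 0)) ≤ L * I.toReal := by
    refine le_of_forall_pos_le_add fun η hη => ?_
    have hd : (0:ℝ) < T + L := by linarith
    have := hmain (η / (T + L)) (by positivity)
    calc dist (w T) (S T (w 0)) ≤ η / (T + L) * T + L * (I.toReal + η / (T + L)) := this
      _ = L * I.toReal + (η / (T + L)) * (T + L) := by ring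
      _ = L * I.toReal + η := by rw [div_mul_cancel₀ _ hd.ne']
  calc ENNReal.ofReal (dist (w T) (S T (w 0))) ≤ ENNReal.ofReal (L * I.toReal) :=
        ENNReal.ofReal_le_ofReal hfinal
    _ = ENNReal.ofReal L * ENNReal.ofReal I.toReal := ENNReal.ofReal_mul hL.le
    _ = ENNReal.ofReal L * I := by rw [ENNReal.ofReal_toReal hI]
end

section
/- Let (E,d) be a metric space and let S, S' : [0,∞) × E → E be two Lipschitz semigroups, and let L denote the Lipschitz constant of S. Then for every u ∈ E and every t ≥ 0, d(S_t u, S'_t u) ≤ L · ∫₀^t limsup_{h→0⁺} d(S_h (S'_s u), S'_h (S'_s u))/h ds, where the integrand is bounded and the integral may be taken as the (upper) Lebesgue integral. -/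
open MeasureTheory Filter

/-- Comparison of two Lipschitz semigroups: the distance between the two orbits at time `t`
is bounded by `L` times the (upper Lebesgue) integral along the orbit of `S'` of the
distance between the tangent vector fields,
`limsup_{h→0⁺} d(S_h (S'_s u), S'_h (S'_s u))/h`. -/
theorem semigroup_comparison {E : Type*} [MetricSpace E]
    (S S' : ℝ → E → E) (L L' : ℝ) (hL : 0 < L) (hL' : 0 < L')
    (hS0 : ∀ u : E, S 0 u = u)
    (hSsemi : ∀ s t : ℝ, 0 ≤ s → 0 ≤ t → ∀ u : E, S t (S s u) = S (t + s) u)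
    (hSlip : ∀ s t : ℝ, 0 ≤ s → 0 ≤ t → ∀ u w : E,
      dist (S t u) (S s w) ≤ L * (|t - s| + dist u w))
    (hS'0 : ∀ u : E, S' 0 u = u)
    (hS'semi : ∀ s t : ℝ, 0 ≤ s → 0 ≤ t → ∀ u : E, S' t (S' s u) = S' (t + s) u)
    (hS'lip : ∀ s t : ℝ, 0 ≤ s → 0 ≤ t → ∀ u w : E,
      dist (S' t u) (S' s w) ≤ L' * (|t - s| + dist u w))
    (u : E) (t : ℝ) (ht : 0 ≤ t) :
    ENNReal.ofReal (dist (S t u) (S' t u)) ≤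
      ENNReal.ofReal L *
        ∫⁻ s in Set.Ioc (0 : ℝ) t,
          ENNReal.ofReal
            (limsup (fun h : ℝ => dist (S h (S' s u)) (S' h (S' s u)) / h)
              (nhdsWithin 0 (Set.Ioi 0))) := by
  classical
  -- continuity of the semigroups in space, at a fixed nonnegative time
  have hScont : ∀ r : ℝ, 0 ≤ r → Continuous fun v => S r v := by
    intro r hr
    refine (LipschitzWith.of_dist_le_mul (K := L.toNNReal) fun v v' => ?_).continuous
    have := hSlip r r hr hr v v'
    rw [sub_self, abs_zero, zero_add] at this
    rwa [Real.coe_toNNReal _ hL.le]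
  have hS'cont : ∀ r : ℝ, 0 ≤ r → Continuous fun v => S' r v := by
    intro r hr
    refine (LipschitzWith.of_dist_le_mul (K := L'.toNNReal) fun v v' => ?_).continuous
    have := hS'lip r r hr hr v v'
    rw [sub_self, abs_zero, zero_add] at this
    rwa [Real.coe_toNNReal _ hL'.le]
  -- the basic bound on difference quotients
  have hquot : ∀ h : ℝ, 0 < h → ∀ v : E,
      dist (S h v) (S' h v) / h ≤ L + L' := by
    intro h hh v
    rw [div_le_iff₀ hh]
    have h1 : dist (S h v) v ≤ L * h := by
      have := hSlip 0 h le_rfl hh.le v v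
      rw [hS0, dist_self, add_zero, sub_zero, abs_of_pos hh] at this
      exact this
    have h2 : dist v (S' h v) ≤ L' * h := by
      have := hS'lip 0 h le_rfl hh.le v v
      rw [hS'0, dist_self, add_zero, sub_zero, abs_of_pos hh, dist_comm] at this
      exact this
    calc dist (S h v) (S' h v) ≤ dist (S h v) v + dist v (S' h v) := dist_triangle _ _ _
      _ ≤ L * h + L' * h := add_le_add h1 h2
      _ = (L + L') * h := by ring
  -- the trajectory of `S'`, clamped to nonnegative times to get global continuity
  set w : ℝ → E := fun s => S' (max s 0) u with hw
  -- the difference quotient at rational time steps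
  set D : ℚ → ℝ → ℝ := fun q s => dist (S q (w s)) (S' q (w s)) / q with hD
  have hwcont : Continuous w := by
    refine (LipschitzWith.of_dist_le_mul (K := L'.toNNReal) fun x y => ?_).continuous
    have h1 := hS'lip (max y 0) (max x 0) (le_max_right _ _) (le_max_right _ _) u u
    rw [dist_self, add_zero] at h1
    have h2 : |max x 0 - max y 0| ≤ |x - y| := abs_max_sub_max_le_abs x y 0
    calc dist (w x) (w y) ≤ L' * |max x 0 - max y 0| := h1
      _ ≤ L' * |x - y| := by nlinarith [abs_nonneg (max x 0 - max y 0)]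
      _ = L'.toNNReal * dist x y := by
          rw [Real.coe_toNNReal _ hL'.le, Real.dist_eq]
  have hDcont : ∀ q : ℚ, 0 < (q : ℝ) → Continuous fun s => D q s := by
    intro q hq
    exact (((hScont q hq.le).comp hwcont).dist
      ((hS'cont q hq.le).comp hwcont)).div_const _
  have hDbound : ∀ (q : ℚ), 0 < (q : ℝ) → ∀ s, D q s ≤ L + L' :=
    fun q hq s => hquot q hq (w s)
  -- the LSC approximations of the limsup
  set Θ : ℕ → ℝ → ENNReal := fun n s =>
    ⨆ p : {q : ℚ // 0 < (q : ℝ) ∧ (q : ℝ) < 1 / (n + 1)}, ENNReal.ofReal (D p s) with hΘ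
  have hΘbound : ∀ n s, Θ n s ≤ ENNReal.ofReal (L + L') :=
    fun n s => iSup_le fun p => ENNReal.ofReal_le_ofReal (hDbound p.1 p.2.1 s)
  have hΘtop : ∀ n s, Θ n s ≠ ⊤ :=
    fun n s => ((hΘbound n s).trans_lt ENNReal.ofReal_lt_top).ne
  have hΘmeas : ∀ n, Measurable (Θ n) := by
    intro n
    exact Measurable.iSup fun p => ((hDcont p.1 p.2.1).measurable).ennreal_ofReal
  have hΘanti : Antitone Θ := by
    intro m n hmn
    intro s
    refine iSup_le fun p => ?_
    have hle : (1 : ℝ) / (n + 1) ≤ 1 / (m + 1) := by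
      apply one_div_le_one_div_of_le (by positivity)
      have : (m : ℝ) ≤ n := Nat.cast_le.2 hmn
      linarith
    exact le_iSup_of_le ⟨p.1, p.2.1, p.2.2.trans_le hle⟩ le_rfl
  set ψ : ℕ → ℝ → ℝ := fun n s => (Θ n s).toReal with hψ
  have hψnonneg : ∀ n s, 0 ≤ ψ n s := fun n s => ENNReal.toReal_nonneg
  have hψbound : ∀ n s, ψ n s ≤ L + L' := fun n s =>
    ENNReal.toReal_le_of_le_ofReal (by positivity) (hΘbound n s)
  have hψle : ∀ (n : ℕ) (q : ℚ), 0 < (q : ℝ) → (q : ℝ) < 1 / (n + 1) →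
      ∀ s, D q s ≤ ψ n s := by
    intro n q hq hqn s
    have h1 : ENNReal.ofReal (D q s) ≤ Θ n s :=
      le_iSup (fun p : {q : ℚ // 0 < (q : ℝ) ∧ (q : ℝ) < 1 / (n + 1)} =>
        ENNReal.ofReal (D p s)) ⟨q, hq, hqn⟩
    rcases le_or_gt (D q s) 0 with h | h
    · exact h.trans (hψnonneg n s)
    · have h2 := ENNReal.toReal_mono (hΘtop n s) h1
      rwa [ENNReal.toReal_ofReal h.le] at h2
  have hψmeas : ∀ n, Measurable (ψ n) := fun n => (hΘmeas n).ennreal_toReal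
  -- lower semicontinuity of ψ n
  have hψlsc : ∀ (n : ℕ) (s : ℝ) (δ : ℝ), 0 < δ →
      ∃ r > 0, ∀ σ, |σ - s| < r → ψ n s - δ ≤ ψ n σ := by
    intro n s δ hδ
    rcases lt_or_ge (ψ n s - δ) 0 with hneg | hpos
    · exact ⟨1, one_pos, fun σ _ => hneg.le.trans (hψnonneg n σ)⟩
    · have hψpos : 0 < ψ n s := lt_of_lt_of_le hδ (by linarith)
      have hlt : ENNReal.ofReal (ψ n s - δ / 2) < Θ n s := by
        rw [← ENNReal.ofReal_toReal (hΘtop n s)]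
        exact (ENNReal.ofReal_lt_ofReal_iff hψpos).2 (by linarith)
      obtain ⟨p, hp⟩ := lt_iSup_iff.1 hlt
      have hplt : ψ n s - δ / 2 < D p s := by
        by_contra hcon
        push_neg at hcon
        exact absurd (ENNReal.ofReal_le_ofReal hcon) (not_le.2 hp)
      have hev : ∀ᶠ σ in nhds s, ψ n s - δ < D p σ :=
        ((hDcont p.1 p.2.1).tendsto s).eventually (eventually_gt_nhds (by linarith))
      obtain ⟨r, hr, hrp⟩ := Metric.eventually_nhds_iff.1 hev
      refine ⟨r, hr, fun σ hσ => ?_⟩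
      have : ψ n s - δ < D p σ := hrp (by rwa [Real.dist_eq])
      exact this.le.trans (hψle n p.1 p.2.1 p.2.2 σ)
  -- interval integrability
  have hψint : ∀ (n : ℕ) (a b : ℝ), IntervalIntegrable (ψ n) volume a b := by
    intro n a b
    rw [intervalIntegrable_iff]
    haveI : IsFiniteMeasure (volume.restrict (Set.uIoc a b)) := by
      constructor
      rw [Measure.restrict_apply_univ, Set.uIoc]
      exact measure_Ioc_lt_top
    refine Integrable.mono' (integrable_const (L + L'))
      ((hψmeas n).aestronglyMeasurable) (ae_of_all _ fun σ => ?_)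
    rw [Real.norm_eq_abs, abs_of_nonneg (hψnonneg n σ)]
    exact hψbound n σ
  set F : ℕ → ℝ → ℝ := fun n x => ∫ σ in (0 : ℝ)..x, ψ n σ with hF
  have hFcont : ∀ n, Continuous (F n) := fun n =>
    intervalIntegral.continuous_primitive (fun a b => hψint n a b) 0
  -- the distance function along the orbits
  set g0 : ℝ → ℝ := fun x => dist (S (t - x) (S' x u)) (S' t u) with hg0def
  have hg00 : g0 0 = dist (S t u) (S' t u) := by
    rw [hg0def]; simp only [sub_zero, hS'0]
  have hg0t : g0 t = 0 := by
    rw [hg0def]; simp only [sub_self, hS0, dist_self]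
  have hg0lip : LipschitzOnWith (L * (1 + L')).toNNReal g0 (Set.Icc 0 t) := by
    refine LipschitzOnWith.of_dist_le_mul fun x hx y hy => ?_
    have habs : dist (g0 x) (g0 y) ≤
        dist (S (t - x) (S' x u)) (S (t - y) (S' y u)) := by
      rw [Real.dist_eq]
      exact abs_dist_sub_le _ _ _
    have h1 := hSlip (t - y) (t - x) (sub_nonneg.2 hy.2) (sub_nonneg.2 hx.2) (S' x u) (S' y u)
    have h2 := hS'lip y x hy.1 hx.1 u u
    rw [dist_self, add_zero] at h2
    have he : t - x - (t - y) = y - x := by ring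
    rw [he] at h1
    have habs2 : |y - x| = |x - y| := abs_sub_comm _ _
    calc dist (g0 x) (g0 y) ≤ L * (|y - x| + dist (S' x u) (S' y u)) := habs.trans h1
      _ ≤ L * (|x - y| + L' * |x - y|) := by
          rw [habs2]
          have := h2
          have hd : (0:ℝ) ≤ dist (S' x u) (S' y u) := dist_nonneg
          nlinarith
      _ = (L * (1 + L')).toNNReal * dist x y := by
          rw [Real.coe_toNNReal _ (by positivity), Real.dist_eq]
          ring
  obtain ⟨G, hGlip, hGeq⟩ := hg0lip.extend_real
  -- the key one-step estimate
  have hstep : ∀ x : ℝ, 0 ≤ x → ∀ h : ℝ, 0 < h → x + h ≤ t →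
      g0 x ≤ g0 (x + h) + L * dist (S h (S' x u)) (S' h (S' x u)) := by
    intro x hx h hh hxht
    have hth : 0 ≤ t - (x + h) := by linarith
    have key1 : S (t - x) (S' x u) = S (t - (x + h)) (S h (S' x u)) := by
      rw [hSsemi h (t - (x + h)) hh.le hth (S' x u)]
      congr 1
      ring
    have key2 : S' (x + h) u = S' h (S' x u) := by
      rw [hS'semi x h hx hh.le u]
      congr 1
      ring
    have htri : g0 x ≤ dist (S (t - x) (S' x u)) (S (t - (x + h)) (S' (x + h) u)) +
        g0 (x + h) := dist_triangle _ _ _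
    have hmid : dist (S (t - x) (S' x u)) (S (t - (x + h)) (S' (x + h) u)) ≤
        L * dist (S h (S' x u)) (S' h (S' x u)) := by
      rw [key1, key2]
      have := hSlip (t - (x + h)) (t - (x + h)) hth hth (S h (S' x u)) (S' h (S' x u))
      rwa [sub_self, abs_zero, zero_add] at this
    linarith
  -- main Gronwall-type estimate, for each n
  have hmain : ∀ n : ℕ, dist (S t u) (S' t u) ≤ L * F n t := by
    intro n
    have key : ∀ ε : ℝ, 0 < ε → dist (S t u) (S' t u) ≤ L * F n t + ε * t := by
      intro ε hε
      set A : Set ℝ := {x | G 0 - G x ≤ L * F n x + ε * x} with hA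
      have hsub : Set.Icc 0 t ⊆ A := by
        have hclosed : IsClosed (A ∩ Set.Icc 0 t) := by
          refine IsClosed.inter ?_ isClosed_Icc
          exact isClosed_le (continuous_const.sub hGlip.continuous)
            ((continuous_const.mul (hFcont n)).add (continuous_const.mul continuous_id))
        have h0A : (0 : ℝ) ∈ A := by
          simp only [hA, Set.mem_setOf_eq, sub_self, hF, intervalIntegral.integral_same,
            mul_zero, zero_add]
          exact le_rfl
        refine hclosed.Icc_subset_of_forall_exists_gt h0A ?_
        rintro x ⟨hxA, hx0, hxt⟩ y hy
        obtain ⟨r, hr, hrψ⟩ := hψlsc n x (ε / L) (div_pos hε hL)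
        have hb : (0 : ℝ) < min (min r (1 / (n + 1))) (min (t - x) (y - x)) := by
          refine lt_min (lt_min hr (by positivity)) (lt_min (by linarith) (by
            simp only [Set.mem_Ioi] at hy; linarith))
        obtain ⟨q, hq0, hqlt⟩ := exists_rat_btwn hb
        have hq_r : (q : ℝ) < r := hqlt.trans_le ((min_le_left _ _).trans (min_le_left _ _))
        have hq_n : (q : ℝ) < 1 / (n + 1) :=
          hqlt.trans_le ((min_le_left _ _).trans (min_le_right _ _))
        have hq_t : (q : ℝ) < t - x :=
          hqlt.trans_le ((min_le_right _ _).trans (min_le_left _ _))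
        have hq_y : (q : ℝ) < y - x :=
          hqlt.trans_le ((min_le_right _ _).trans (min_le_right _ _))
        set z : ℝ := x + q with hz
        have hzt : z ≤ t := by rw [hz]; linarith
        have hxz : x < z := by rw [hz]; linarith
        refine ⟨z, ?_, hxz, by rw [hz]; linarith⟩
        -- show z ∈ A
        have hgstep := hstep x hx0 q hq0 hzt
        rw [← hz] at hgstep
        have hDx : dist (S (q : ℝ) (S' x u)) (S' (q : ℝ) (S' x u)) = D q x * q := by
          rw [hD]
          simp only [hw, max_eq_left hx0]
          rw [div_mul_cancel₀ _ (ne_of_gt hq0)]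
        have hq_ψ : D q x ≤ ψ n x := hψle n q hq0 hq_n x
        have hIlow : (ψ n x - ε / L) * (q : ℝ) ≤ ∫ σ in x..z, ψ n σ := by
          have hconst : ∫ σ in x..z, (ψ n x - ε / L) = (ψ n x - ε / L) * q := by
            rw [intervalIntegral.integral_const, smul_eq_mul, hz]
            ring
          rw [← hconst]
          refine intervalIntegral.integral_mono_on hxz.le
            (intervalIntegrable_const) (hψint n x z) fun σ hσ => ?_
          refine hrψ σ ?_
          rw [abs_of_nonneg (by linarith [hσ.1])]
          have := hσ.2
          rw [hz] at this
          linarith [hq_r]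
        have hFz : F n z - F n x = ∫ σ in x..z, ψ n σ := by
          have := intervalIntegral.integral_add_adjacent_intervals
            (hψint n 0 x) (hψint n x z)
          rw [hF]
          dsimp only
          linarith [this]
        have hGx : g0 x = G x := hGeq ⟨hx0, hxt.le⟩
        have hGz : g0 z = G z := hGeq ⟨by linarith, hzt⟩
        have c1 : g0 x - g0 z ≤ L * (D q x * q) := by
          rw [← hDx]; linarith [hgstep]
        have c2 : L * (D q x * q) ≤ L * (ψ n x * q) :=
          mul_le_mul_of_nonneg_left (mul_le_mul_of_nonneg_right hq_ψ hq0.le) hL.le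
        have c3 : L * (ψ n x * q) = L * ((ψ n x - ε / L) * q) + ε * q := by
          field_simp
          ring
        have c5 : L * ((ψ n x - ε / L) * q) ≤ L * (F n z - F n x) := by
          rw [hFz]
          nlinarith [hIlow]
        have hxA' : G 0 - G x ≤ L * F n x + ε * x := hxA
        show G 0 - G z ≤ L * F n z + ε * z
        rw [← hGx] at hxA'
        rw [← hGz]
        have hεz : ε * z = ε * x + ε * q := by rw [hz]; ring
        linarith
      have htA : t ∈ A := hsub ⟨ht, le_rfl⟩
      have hG0 : G 0 = g0 0 := (hGeq ⟨le_rfl, ht⟩).symm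
      have hGt : G t = g0 t := (hGeq ⟨ht, le_rfl⟩).symm
      have := htA
      simp only [hA, Set.mem_setOf_eq] at this
      rw [hG0, hGt, hg00, hg0t] at this
      linarith
    refine le_of_forall_pos_le_add fun ε hε => ?_
    have := key (ε / (t + 1)) (by positivity)
    have hbd : ε / (t + 1) * t ≤ ε := by
      rw [div_mul_eq_mul_div, div_le_iff₀ (by linarith)]
      nlinarith
    linarith
  -- convert the real inequality into the lintegral inequality
  have hint : ∀ n : ℕ, ENNReal.ofReal (dist (S t u) (S' t u)) ≤
      ENNReal.ofReal L * ∫⁻ s in Set.Ioc (0 : ℝ) t, Θ n s := by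
    intro n
    have hInt2 : IntegrableOn (ψ n) (Set.Ioc (0 : ℝ) t) volume :=
      (hψint n 0 t).1
    have hFI : F n t = ∫ σ in Set.Ioc (0 : ℝ) t, ψ n σ := by
      rw [hF]
      exact intervalIntegral.integral_of_le ht
    have h1 : ENNReal.ofReal (F n t) = ∫⁻ s in Set.Ioc (0 : ℝ) t, Θ n s := by
      rw [hFI, ofReal_integral_eq_lintegral_ofReal hInt2
        (ae_of_all _ fun σ => hψnonneg n σ)]
      refine lintegral_congr fun s => ?_
      rw [hψ]
      exact ENNReal.ofReal_toReal (hΘtop n s)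
    calc ENNReal.ofReal (dist (S t u) (S' t u))
        ≤ ENNReal.ofReal (L * F n t) := ENNReal.ofReal_le_ofReal (hmain n)
      _ = ENNReal.ofReal L * ENNReal.ofReal (F n t) := ENNReal.ofReal_mul hL.le
      _ = _ := by rw [h1]
  -- the infimum of the Θ n is below the limsup
  have hinf : ∀ s : ℝ, 0 ≤ s → (⨅ n, Θ n s) ≤
      ENNReal.ofReal
        (limsup (fun h : ℝ => dist (S h (S' s u)) (S' h (S' s u)) / h)
          (nhdsWithin 0 (Set.Ioi 0))) := by
    intro s hs
    set Φ : ℝ := limsup (fun h : ℝ => dist (S h (S' s u)) (S' h (S' s u)) / h)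
      (nhdsWithin 0 (Set.Ioi 0)) with hΦ
    have hbdd : IsBoundedUnder (· ≤ ·) (nhdsWithin (0 : ℝ) (Set.Ioi 0))
        (fun h : ℝ => dist (S h (S' s u)) (S' h (S' s u)) / h) := by
      refine ⟨L + L', ?_⟩
      rw [eventually_map]
      filter_upwards [self_mem_nhdsWithin] with h hh
      exact hquot h hh (S' s u)
    refine ENNReal.le_of_forall_pos_le_add fun ε hε _ => ?_
    have hΦε : Φ < Φ + ε := lt_add_of_pos_right _ (by exact_mod_cast hε)
    have hev : ∀ᶠ h in nhdsWithin (0 : ℝ) (Set.Ioi 0),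
        dist (S h (S' s u)) (S' h (S' s u)) / h < Φ + ε :=
      eventually_lt_of_limsup_lt hΦε hbdd
    rw [(nhdsGT_basis (0 : ℝ)).eventually_iff] at hev
    obtain ⟨b, hb0, hb⟩ := hev
    obtain ⟨n, hn⟩ := exists_nat_one_div_lt hb0
    have hΘn : Θ n s ≤ ENNReal.ofReal (Φ + ε) := by
      refine iSup_le fun p => ENNReal.ofReal_le_ofReal ?_
      have hDp : D p s = dist (S (p : ℝ) (S' s u)) (S' (p : ℝ) (S' s u)) / p := by
        rw [hD]
        simp only [hw, max_eq_left hs]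
      rw [hDp]
      exact (hb ⟨p.2.1, p.2.2.trans hn⟩).le
    calc (⨅ m, Θ m s) ≤ Θ n s := iInf_le _ n
      _ ≤ ENNReal.ofReal (Φ + ε) := hΘn
      _ ≤ ENNReal.ofReal Φ + ENNReal.ofReal ε := ENNReal.ofReal_add_le
      _ = ENNReal.ofReal Φ + ε := by rw [ENNReal.ofReal_coe_nnreal]
  -- conclude by monotone convergence
  have hfin : (∫⁻ s in Set.Ioc (0 : ℝ) t, Θ 0 s) ≠ ⊤ := by
    have : (∫⁻ s in Set.Ioc (0 : ℝ) t, Θ 0 s) ≤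
        ENNReal.ofReal (L + L') * volume (Set.Ioc (0 : ℝ) t) := by
      calc (∫⁻ s in Set.Ioc (0 : ℝ) t, Θ 0 s)
          ≤ ∫⁻ _ in Set.Ioc (0 : ℝ) t, ENNReal.ofReal (L + L') :=
            lintegral_mono fun s => hΘbound 0 s
        _ = ENNReal.ofReal (L + L') * volume (Set.Ioc (0 : ℝ) t) :=
            setLIntegral_const _ _
    exact (this.trans_lt (ENNReal.mul_lt_top ENNReal.ofReal_lt_top measure_Ioc_lt_top)).ne
  have hMCT : (∫⁻ s in Set.Ioc (0 : ℝ) t, ⨅ n, Θ n s) =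
      ⨅ n, ∫⁻ s in Set.Ioc (0 : ℝ) t, Θ n s :=
    lintegral_iInf (fun n => hΘmeas n) (fun m n hmn s => hΘanti hmn s) hfin
  have hL0 : ENNReal.ofReal L ≠ 0 := by
    simp [ENNReal.ofReal_eq_zero, not_le, hL]
  have hLtop : ENNReal.ofReal L ≠ ⊤ := ENNReal.ofReal_ne_top
  have hdiv : ∀ n : ℕ, ENNReal.ofReal (dist (S t u) (S' t u)) / ENNReal.ofReal L ≤
      ∫⁻ s in Set.Ioc (0 : ℝ) t, Θ n s := by
    intro n
    rw [ENNReal.div_le_iff_le_mul (Or.inl hL0) (Or.inl hLtop), mul_comm]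
    exact hint n
  have h1 : ENNReal.ofReal (dist (S t u) (S' t u)) / ENNReal.ofReal L ≤
      ∫⁻ s in Set.Ioc (0 : ℝ) t, ⨅ n, Θ n s := by
    rw [hMCT]; exact le_iInf hdiv
  have h2 : (∫⁻ s in Set.Ioc (0 : ℝ) t, ⨅ n, Θ n s) ≤
      ∫⁻ s in Set.Ioc (0 : ℝ) t,
        ENNReal.ofReal
          (limsup (fun h : ℝ => dist (S h (S' s u)) (S' h (S' s u)) / h)
            (nhdsWithin 0 (Set.Ioi 0))) := by
    refine lintegral_mono_ae ?_
    exact (ae_restrict_iff' measurableSet_Ioc).2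
      (Eventually.of_forall fun s hs => hinf s hs.1.le)
  calc ENNReal.ofReal (dist (S t u) (S' t u))
      = ENNReal.ofReal L * (ENNReal.ofReal (dist (S t u) (S' t u)) / ENNReal.ofReal L) := by
        rw [ENNReal.mul_div_cancel hL0 hLtop]
    _ ≤ _ := by exact mul_le_mul_right (h1.trans h2) _
end

section
/- Let m ≤ M be real numbers, let C > 0, and let v : ℝ → [m, M] be a function satisfying the one-sided Lipschitz condition v(y) − v(x) ≤ C·(y − x) for all x < y. Then for all real a < b the total variation of v on [a,b] satisfies Tot.Var.(v; [a,b]) ≤ 2C·(b − a) + (M − m). In particular, a function with values in a compact interval K satisfying the one-sided bound with constant 1/(κ t) has total variation on [a,b] at most 2(b−a)/(κ t) + diam(K). -/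
/-- A function with values in `[m, M]` satisfying the one-sided Lipschitz condition
`v(y) − v(x) ≤ C (y − x)` for `x < y` has total variation on `[a,b]` at most
`2C(b − a) + (M − m)`. -/
theorem totalVariation_of_oneSided_lipschitz
    (m M C : ℝ) (hm : m ≤ M) (hC : 0 < C)
    (v : ℝ → ℝ) (hv : ∀ x, v x ∈ Set.Icc m M)
    (hosl : ∀ x y : ℝ, x < y → v y - v x ≤ C * (y - x)) :
    ∀ a b : ℝ, a < b →
      eVariationOn v (Set.Icc a b) ≤ ENNReal.ofReal (2 * C * (b - a) + (M - m)) := by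
  intro a b hab
  set g : ℝ → ℝ := fun x => C * x - v x with hg
  have hgmono : Monotone g := by
    intro x y hxy
    rcases eq_or_lt_of_le hxy with rfl | hlt
    · exact le_rfl
    · have := hosl x y hlt
      simp only [hg]
      nlinarith
  rw [eVariationOn]
  refine iSup_le ?_
  rintro ⟨n, u, hu, hus⟩
  have key : ∀ i, edist (v (u (i + 1))) (v (u i)) ≤
      ENNReal.ofReal ((C * u (i + 1) - C * u i) + (g (u (i + 1)) - g (u i))) := by
    intro i
    rw [edist_dist, Real.dist_eq]
    apply ENNReal.ofReal_le_ofReal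
    have h1 : 0 ≤ C * u (i + 1) - C * u i := by
      have := hu (Nat.le_succ i)
      nlinarith
    have h2 : 0 ≤ g (u (i + 1)) - g (u i) := sub_nonneg.2 (hgmono (hu (Nat.le_succ i)))
    have : v (u (i + 1)) - v (u i) = (C * u (i + 1) - C * u i) - (g (u (i + 1)) - g (u i)) := by
      simp only [hg]; ring
    rw [this, abs_sub_comm, abs_sub_le_iff]
    constructor <;> linarith
  calc ∑ i ∈ Finset.range n, edist (v (u (i + 1))) (v (u i))
      ≤ ∑ i ∈ Finset.range n,
        ENNReal.ofReal ((C * u (i + 1) - C * u i) + (g (u (i + 1)) - g (u i))) :=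
        Finset.sum_le_sum fun i _ => key i
    _ = ENNReal.ofReal (∑ i ∈ Finset.range n,
        ((C * u (i + 1) - C * u i) + (g (u (i + 1)) - g (u i)))) := by
        rw [ENNReal.ofReal_sum_of_nonneg]
        · intro i _
          have h1 : 0 ≤ C * u (i + 1) - C * u i := by
            have := hu (Nat.le_succ i); nlinarith
          have h2 : 0 ≤ g (u (i + 1)) - g (u i) := sub_nonneg.2 (hgmono (hu (Nat.le_succ i)))
          linarith
    _ ≤ ENNReal.ofReal (2 * C * (b - a) + (M - m)) := by
        apply ENNReal.ofReal_le_ofReal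
        rw [Finset.sum_add_distrib, Finset.sum_range_sub (fun i => C * u i),
          Finset.sum_range_sub (fun i => g (u i))]
        have h0 := hus 0
        have hn := hus n
        simp only [Set.mem_Icc] at h0 hn
        have hv0 := hv (u 0)
        have hvn := hv (u n)
        simp only [Set.mem_Icc] at hv0 hvn
        simp only [hg]
        nlinarith
end
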